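/- Let q ≡ 1 (mod 2ℓ) and let π be a monic irreducible polynomial in F_q[t]. Write r = r̃·π^α with π ∤ r̃. Then for the Gauss sum G_{ℓ,j}(r, π^i): (a) if i ≤ α and ij ≢ 0 (mod ℓ), then G_{ℓ,j}(r, π^i) = 0; (b) if i ≤ α and ij ≡ 0 (mod ℓ), then G_{ℓ,j}(r, π^i) = φ(π^i), the polynomial Euler phi function; (c) if i = α+1 and ij ≡ 0 (mod ℓ), then G_{ℓ,j}(r, π^i) = −q^{(i−1)deg(π)}; (d) if i ≥ α+2, then G_{ℓ,j}(r, π^i) = 0. -/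

import Mathlib

open Polynomial Finset
open scoped Classical

/-- The `ℓ`-th power residue symbol `(a/c)_ℓ` on `𝔽_q[t]`, bundled with its defining
properties: it vanishes off coprime pairs, is multiplicative in the modulus, and on a
monic irreducible modulus `π` it is given by the image under an isomorphism `Ω` (here
`omega`) of the `ℓ`-th roots of unity of `𝔽_q` into `ℂ` of the residue
`a^((q^{deg π} - 1)/ℓ) mod π`. -/
structure ResidueSymbol (Fq : Type) [Field Fq] [Fintype Fq] (ℓ : ℕ) where
  toFun : Polynomial Fq → Polynomial Fq → ℂ
  omega : Fq → ℂ
  omega_mul : ∀ x y : Fq, x ^ ℓ = 1 → y ^ ℓ = 1 → omega (x * y) = omega x * omega y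
  omega_inj : ∀ x y : Fq, x ^ ℓ = 1 → y ^ ℓ = 1 → omega x = omega y → x = y
  omega_pow : ∀ x : Fq, x ^ ℓ = 1 → omega x ^ ℓ = 1
  zero_of_not_coprime : ∀ a c : Polynomial Fq, ¬ IsCoprime a c → toFun a c = 0
  mul_bottom : ∀ a c₁ c₂ : Polynomial Fq, toFun a (c₁ * c₂) = toFun a c₁ * toFun a c₂
  bottom_one : ∀ a : Polynomial Fq, toFun a 1 = 1
  prime_spec : ∀ π a : Polynomial Fq, π.Monic → Irreducible π → IsCoprime a π →
    ∃ α : Fq, α ^ ℓ = 1 ∧ toFun a π = omega α ∧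
      π ∣ a ^ ((Fintype.card Fq ^ π.natDegree - 1) / ℓ) - Polynomial.C α

/-- The Hayes additive character `e_q` on `𝔽_q((1/t))`, restricted to rational functions:
`e_q(b) = ψ(b₁)` where `b₁` is the coefficient of `1/t` in the Laurent expansion of `b`
at infinity and `ψ` is a nontrivial additive character of `𝔽_q`.  The functional `b1`
extracting this coefficient is pinned down by its additivity, its vanishing on
polynomials and on fractions `g/h` with `deg g + 2 ≤ deg h`, and `b1 (a / t) = a`. -/
structure HayesChar (Fq : Type) [Field Fq] [Fintype Fq] where
  toFun : RatFunc Fq → ℂ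
  b1 : RatFunc Fq → Fq
  b1_add : ∀ f g : RatFunc Fq, b1 (f + g) = b1 f + b1 g
  b1_poly : ∀ p : Polynomial Fq, b1 (algebraMap (Polynomial Fq) (RatFunc Fq) p) = 0
  b1_inv : ∀ a : Fq,
    b1 (algebraMap (Polynomial Fq) (RatFunc Fq) (Polynomial.C a) /
      algebraMap (Polynomial Fq) (RatFunc Fq) Polynomial.X) = a
  b1_small : ∀ g h : Polynomial Fq, h ≠ 0 → g.natDegree + 2 ≤ h.natDegree →
    b1 (algebraMap (Polynomial Fq) (RatFunc Fq) g /
      algebraMap (Polynomial Fq) (RatFunc Fq) h) = 0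
  map_add' : ∀ f g : RatFunc Fq, toFun (f + g) = toFun f * toFun g
  map_zero' : toFun 0 = 1
  factors_b1 : ∀ f g : RatFunc Fq, b1 f = b1 g → toFun f = toFun g
  nontrivial' : ∃ f : RatFunc Fq, toFun f ≠ 1

/-- The polynomial `∑ aᵢ tⁱ` of degree `< n` with coefficient tuple `a`; these
parametrize the residues modulo a polynomial of degree `n`. -/
noncomputable def polyOf (Fq : Type) [Field Fq] (n : ℕ) (a : Fin n → Fq) : Polynomial Fq :=
  ∑ i : Fin n, Polynomial.C (a i) * Polynomial.X ^ (i : ℕ)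

/-- The shifted order-`ℓ` Gauss sum `G_{ℓ,j}(r,c) = ∑_{a mod c} (a/c)_ℓ^j e_q(ra/c)`. -/
noncomputable def GaussSum {Fq : Type} [Field Fq] [Fintype Fq] {ℓ : ℕ}
    (χ : ResidueSymbol Fq ℓ) (e : HayesChar Fq) (j : ℕ) (r c : Polynomial Fq) : ℂ :=
  ∑ a : Fin c.natDegree → Fq,
    χ.toFun (polyOf Fq c.natDegree a) c ^ j *
      e.toFun (algebraMap (Polynomial Fq) (RatFunc Fq) (r * polyOf Fq c.natDegree a) /
        algebraMap (Polynomial Fq) (RatFunc Fq) c)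

/-- The Euler phi function for polynomials: the number of residues modulo `c`
coprime to `c`. -/
noncomputable def polyPhi {Fq : Type} [Field Fq] [Fintype Fq] (c : Polynomial Fq) : ℕ :=
  Nat.card {a : Fin c.natDegree → Fq // IsCoprime (polyOf Fq c.natDegree a) c}
section PolyOf
set_option linter.unusedSectionVars false

variable {Fq : Type} [Field Fq] [Fintype Fq]

theorem polyOf_coeff (n : ℕ) (a : Fin n → Fq) (k : ℕ) :
    (polyOf Fq n a).coeff k = if h : k < n then a ⟨k, h⟩ else 0 := by
  classical
  rw [polyOf, Polynomial.finset_sum_coeff]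
  simp only [Polynomial.coeff_C_mul, Polynomial.coeff_X_pow]
  split
  · next h =>
    rw [Finset.sum_eq_single (⟨k, h⟩ : Fin n)]
    · simp
    · intro b _ hb
      have : ¬(k = (b : ℕ)) := by
        intro hc; exact hb (by ext; simp [← hc])
      simp [this]
    · simp
  · next h =>
    apply Finset.sum_eq_zero
    intro b _
    have : ¬(k = (b : ℕ)) := fun hc => h (hc ▸ b.isLt)
    simp [this]

theorem polyOf_degree_lt (n : ℕ) (a : Fin n → Fq) : (polyOf Fq n a).degree < (n : ℕ) := by
  by_cases h0 : polyOf Fq n a = 0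
  · rw [h0]
    simp only [Polynomial.degree_zero]
    exact WithBot.bot_lt_coe n
  · rw [Polynomial.degree_lt_iff_coeff_zero]
    intro k hk
    have hk' : ¬ k < n := by exact_mod_cast not_lt.2 hk
    simp [polyOf_coeff, hk']

theorem polyOf_eq_self (n : ℕ) (p : Polynomial Fq) (hp : p.degree < (n : ℕ)) :
    polyOf Fq n (fun k => p.coeff k) = p := by
  ext k
  rw [polyOf_coeff]
  split
  · rfl
  · next h =>
    exact (Polynomial.coeff_eq_zero_of_degree_lt (lt_of_lt_of_le hp (by exact_mod_cast not_lt.1 h))).symm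

theorem polyOf_injective (n : ℕ) : Function.Injective (polyOf Fq n) := by
  intro a b hab
  funext k
  have := congrArg (fun p => Polynomial.coeff p (k : ℕ)) hab
  simpa [polyOf_coeff, k.isLt] using this

theorem sum_polyOf_congr {n n' : ℕ} (h : n = n') (F : Polynomial Fq → ℂ) :
    (∑ a : Fin n → Fq, F (polyOf Fq n a)) = ∑ a : Fin n' → Fq, F (polyOf Fq n' a) := by
  subst h; rfl

theorem sum_polyOf_comp {n : ℕ} (σ : Polynomial Fq → Polynomial Fq)
    (hdeg : ∀ p : Polynomial Fq, p.degree < (n : ℕ) → (σ p).degree < (n : ℕ))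
    (hinj : ∀ p q : Polynomial Fq, p.degree < (n : ℕ) → q.degree < (n : ℕ) → σ p = σ q → p = q)
    (F : Polynomial Fq → ℂ) :
    (∑ a : Fin n → Fq, F (polyOf Fq n a)) = ∑ a : Fin n → Fq, F (σ (polyOf Fq n a)) := by
  classical
  set τ : (Fin n → Fq) → (Fin n → Fq) := fun a k => (σ (polyOf Fq n a)).coeff k with hτ
  have hpoly : ∀ a, polyOf Fq n (τ a) = σ (polyOf Fq n a) := fun a =>
    polyOf_eq_self n _ (hdeg _ (polyOf_degree_lt n a))
  have hinj' : Function.Injective τ := by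
    intro a b hab
    have : σ (polyOf Fq n a) = σ (polyOf Fq n b) := by
      rw [← hpoly a, ← hpoly b, hab]
    exact polyOf_injective n (hinj _ _ (polyOf_degree_lt n a) (polyOf_degree_lt n b) this)
  have hbij : Function.Bijective τ := Finite.injective_iff_bijective.1 hinj'
  refine (Fintype.sum_bijective τ hbij _ _ ?_).symm
  intro a
  rw [hpoly a]

end PolyOf
section Split

variable {Fq : Type} [Field Fq] [Fintype Fq]

theorem sum_split (g : Polynomial Fq) (hg : g.Monic) (n₁ n₂ : ℕ) (hn₁ : g.natDegree = n₁)
    (F : Polynomial Fq → ℂ) :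
    (∑ a : Fin (n₁ + n₂) → Fq, F (polyOf Fq (n₁ + n₂) a))
      = ∑ b : Fin n₂ → Fq, ∑ a : Fin n₁ → Fq, F (polyOf Fq n₁ a + g * polyOf Fq n₂ b) := by
  classical
  have hg0 : g ≠ 0 := hg.ne_zero
  have hgdeg : g.degree = (n₁ : ℕ) := by rw [Polynomial.degree_eq_natDegree hg0, hn₁]
  have hdeg : ∀ (a : Fin n₁ → Fq) (b : Fin n₂ → Fq),
      (polyOf Fq n₁ a + g * polyOf Fq n₂ b).degree < ((n₁ + n₂ : ℕ) : WithBot ℕ) := by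
    intro a b
    apply lt_of_le_of_lt (Polynomial.degree_add_le _ _)
    apply max_lt
    · exact lt_of_lt_of_le (polyOf_degree_lt n₁ a) (by exact_mod_cast Nat.le_add_right n₁ n₂)
    · rw [Polynomial.degree_mul, hgdeg]
      have : ((n₁ + n₂ : ℕ) : WithBot ℕ) = (n₁ : ℕ) + (n₂ : ℕ) := by push_cast; ring
      rw [this]
      exact WithBot.add_lt_add_left (by exact_mod_cast WithBot.coe_ne_bot) (polyOf_degree_lt n₂ b)
  set E : ((Fin n₁ → Fq) × (Fin n₂ → Fq)) → (Fin (n₁ + n₂) → Fq) :=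
    fun x k => (polyOf Fq n₁ x.1 + g * polyOf Fq n₂ x.2).coeff k with hE
  have hEpoly : ∀ x, polyOf Fq (n₁ + n₂) (E x) = polyOf Fq n₁ x.1 + g * polyOf Fq n₂ x.2 :=
    fun x => polyOf_eq_self _ _ (hdeg x.1 x.2)
  have hkey : ∀ (a a' : Fin n₁ → Fq) (b b' : Fin n₂ → Fq),
      polyOf Fq n₁ a + g * polyOf Fq n₂ b = polyOf Fq n₁ a' + g * polyOf Fq n₂ b' →
      a = a' ∧ b = b' := by
    intro a a' b b' h
    have hb : polyOf Fq n₂ b = polyOf Fq n₂ b' := by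
      by_contra hne
      have hsub : polyOf Fq n₁ a - polyOf Fq n₁ a' = g * (polyOf Fq n₂ b' - polyOf Fq n₂ b) := by
        linear_combination h
      have hdlt : (polyOf Fq n₁ a - polyOf Fq n₁ a').degree < (n₁ : ℕ) :=
        lt_of_le_of_lt (Polynomial.degree_sub_le _ _)
          (max_lt (polyOf_degree_lt _ _) (polyOf_degree_lt _ _))
      have hne' : polyOf Fq n₂ b' - polyOf Fq n₂ b ≠ 0 := sub_ne_zero.2 fun hc => hne hc.symm
      have : ((n₁ : ℕ) : WithBot ℕ) ≤ (g * (polyOf Fq n₂ b' - polyOf Fq n₂ b)).degree := by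
        rw [Polynomial.degree_mul, hgdeg]
        have := Polynomial.zero_le_degree_iff.2 hne'
        calc ((n₁ : ℕ) : WithBot ℕ) = (n₁ : ℕ) + 0 := by simp
          _ ≤ _ := add_le_add le_rfl this
      rw [← hsub] at this
      exact absurd (lt_of_lt_of_le hdlt this) (lt_irrefl _)
    have ha : polyOf Fq n₁ a = polyOf Fq n₁ a' := by
      have := h; rw [hb] at this; exact add_right_cancel this
    exact ⟨polyOf_injective _ ha, polyOf_injective _ hb⟩
  have hinj : Function.Injective E := by
    intro x y hxy
    have : polyOf Fq n₁ x.1 + g * polyOf Fq n₂ x.2 = polyOf Fq n₁ y.1 + g * polyOf Fq n₂ y.2 := by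
      rw [← hEpoly x, ← hEpoly y, hxy]
    obtain ⟨h1, h2⟩ := hkey _ _ _ _ this
    exact Prod.ext h1 h2
  have hbij : Function.Bijective E := by
    rw [Fintype.bijective_iff_injective_and_card]
    refine ⟨hinj, ?_⟩
    simp [Fintype.card_fun, pow_add]
  rw [← Fintype.sum_bijective E hbij (fun x => F (polyOf Fq n₁ x.1 + g * polyOf Fq n₂ x.2))
    (fun a => F (polyOf Fq (n₁ + n₂) a)) (fun x => by show F _ = F _; rw [hEpoly x])]
  rw [Fintype.sum_prod_type_right]

end Split
section Hayes
set_option linter.unusedSectionVars false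

variable {Fq : Type} [Field Fq] [Fintype Fq]

noncomputable def psiOf (e : HayesChar Fq) : Fq → ℂ := fun x =>
  e.toFun (algebraMap (Polynomial Fq) (RatFunc Fq) (Polynomial.C x) /
    algebraMap (Polynomial Fq) (RatFunc Fq) Polynomial.X)

theorem e_eq_psi (e : HayesChar Fq) (f : RatFunc Fq) : e.toFun f = psiOf e (e.b1 f) := by
  apply e.factors_b1
  rw [e.b1_inv]

theorem psi_zero (e : HayesChar Fq) : psiOf e 0 = 1 := by
  rw [psiOf]
  simp only [map_zero, zero_div]
  exact e.map_zero'

theorem psi_add (e : HayesChar Fq) (x y : Fq) : psiOf e (x + y) = psiOf e x * psiOf e y := by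
  show e.toFun _ = e.toFun _ * e.toFun _
  rw [← e.map_add']
  congr 1
  rw [Polynomial.C_add, map_add, add_div]

theorem e_poly (e : HayesChar Fq) (p : Polynomial Fq) :
    e.toFun (algebraMap (Polynomial Fq) (RatFunc Fq) p) = 1 := by
  rw [e_eq_psi, e.b1_poly, psi_zero]

theorem sum_psi (e : HayesChar Fq) : ∑ x : Fq, psiOf e x = 0 := by
  obtain ⟨f, hf⟩ := e.nontrivial'
  have hψ : psiOf e (e.b1 f) ≠ 1 := by rw [← e_eq_psi]; exact hf
  set x₀ := e.b1 f
  have hshift : ∑ x : Fq, psiOf e x = ∑ x : Fq, psiOf e (x + x₀) :=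
    Fintype.sum_equiv (Equiv.addRight x₀).symm _ _ (fun x => by simp)
  have h2 : ∑ x : Fq, psiOf e (x + x₀) = (∑ x : Fq, psiOf e x) * psiOf e x₀ := by
    rw [Finset.sum_mul]
    exact Finset.sum_congr rfl fun x _ => psi_add e x x₀
  have hfin : (∑ x : Fq, psiOf e x) * (psiOf e x₀ - 1) = 0 := by
    rw [mul_sub, mul_one, ← h2, ← hshift, sub_self]
  rcases mul_eq_zero.1 hfin with h | h
  · exact h
  · exact absurd (sub_eq_zero.1 h) hψ

theorem sum_coord {n : ℕ} (k : Fin n) (f : Fq → ℂ) (hf : ∑ x : Fq, f x = 0) :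
    ∑ a : Fin n → Fq, f (a k) = 0 := by
  classical
  rw [Fintype.sum_equiv (Equiv.piSplitAt k (fun _ => Fq)) (fun a => f (a k))
    (fun x => f x.1) (fun a => rfl)]
  rw [Fintype.sum_prod_type]
  have h1 : ∀ x : Fq, (∑ _b : {j : Fin n // j ≠ k} → Fq, f x)
      = (Fintype.card ({j : Fin n // j ≠ k} → Fq) : ℂ) * f x := by
    intro x; rw [Finset.sum_const, Finset.card_univ, nsmul_eq_mul]
  simp_rw [h1, ← Finset.mul_sum, hf, mul_zero]

theorem b1_div (e : HayesChar Fq) (π : Polynomial Fq) (hπm : π.Monic)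
    (hd : 1 ≤ π.natDegree) (p : Polynomial Fq) (hp : p.degree < π.degree) :
    e.b1 (algebraMap (Polynomial Fq) (RatFunc Fq) p /
      algebraMap (Polynomial Fq) (RatFunc Fq) π) = p.coeff (π.natDegree - 1) := by
  classical
  set d := π.natDegree with hdd
  set c := p.coeff (d - 1) with hc
  set A := algebraMap (Polynomial Fq) (RatFunc Fq) with hA
  have hπ0 : π ≠ 0 := hπm.ne_zero
  have hX0 : (Polynomial.X : Polynomial Fq) ≠ 0 := Polynomial.X_ne_zero
  have hAπ : A π ≠ 0 := RatFunc.algebraMap_ne_zero hπ0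
  have hAX : A Polynomial.X ≠ 0 := RatFunc.algebraMap_ne_zero hX0
  set g : Polynomial Fq := p * Polynomial.X - Polynomial.C c * π with hg
  have hsplit : A p / A π = A g / A (π * Polynomial.X) + A (Polynomial.C c) / A Polynomial.X := by
    rw [hg, map_mul, map_sub, map_mul, map_mul]
    field_simp
    ring
  have hpcoeff : ∀ k, d ≤ k → p.coeff k = 0 := by
    intro k hk
    apply Polynomial.coeff_eq_zero_of_degree_lt
    apply lt_of_lt_of_le hp
    rw [Polynomial.degree_eq_natDegree hπ0, ← hdd]
    exact_mod_cast hk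
  have hgdeg : g.degree ≤ ((d - 1 : ℕ) : WithBot ℕ) := by
    rw [Polynomial.degree_le_iff_coeff_zero]
    intro m hm
    have hm' : d ≤ m := by
      have : (d - 1 : ℕ) < m := by exact_mod_cast hm
      omega
    have hm1 : m = (m - 1) + 1 := by omega
    rw [hg, Polynomial.coeff_sub, Polynomial.coeff_C_mul, hm1, Polynomial.coeff_mul_X, ← hm1]
    by_cases hmd : m = d
    · have hπc : π.coeff m = 1 := by rw [hmd, hdd]; exact hπm.coeff_natDegree
      have hpc : p.coeff (m - 1) = c := by rw [hc]; congr 1; omega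
      rw [hπc, hpc, mul_one, sub_self]
    · have h1 : p.coeff (m - 1) = 0 := hpcoeff _ (by omega)
      have h2 : π.coeff m = 0 := Polynomial.coeff_eq_zero_of_natDegree_lt (by omega)
      rw [h1, h2, mul_zero, sub_zero]
  have hng : g.natDegree ≤ d - 1 := Polynomial.natDegree_le_iff_degree_le.2 hgdeg
  have hπX : π * Polynomial.X ≠ 0 := mul_ne_zero hπ0 hX0
  have hdeg : (π * Polynomial.X).natDegree = d + 1 := by
    rw [Polynomial.natDegree_mul hπ0 hX0, Polynomial.natDegree_X, hdd]
  rw [hsplit, e.b1_add, e.b1_inv, e.b1_small g (π * Polynomial.X) hπX (by omega), zero_add]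

end Hayes
section CharSum
set_option linter.unusedSectionVars false

variable {Fq : Type} [Field Fq] [Fintype Fq]

theorem e_div_eq_psi_mod (e : HayesChar Fq) (π : Polynomial Fq) (hπm : π.Monic)
    (hd : 1 ≤ π.natDegree) (q : Polynomial Fq) :
    e.toFun (algebraMap (Polynomial Fq) (RatFunc Fq) q /
      algebraMap (Polynomial Fq) (RatFunc Fq) π)
      = psiOf e ((q %ₘ π).coeff (π.natDegree - 1)) := by
  classical
  set A := algebraMap (Polynomial Fq) (RatFunc Fq) with hA
  have hπ0 : π ≠ 0 := hπm.ne_zero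
  have hAπ : A π ≠ 0 := RatFunc.algebraMap_ne_zero hπ0
  have hmod : q %ₘ π + π * (q /ₘ π) = q := Polynomial.modByMonic_add_div q π
  have hsplit : A q / A π = A (q %ₘ π) / A π + A (q /ₘ π) := by
    have h1 : A (q %ₘ π) + A π * A (q /ₘ π) = A q := by
      rw [← map_mul, ← map_add, hmod]
    rw [div_eq_iff hAπ, add_mul, div_mul_cancel₀ _ hAπ]
    linear_combination -h1
  rw [hsplit, e_eq_psi, e.b1_add, e.b1_poly, add_zero,
    b1_div e π hπm hd _ (Polynomial.degree_modByMonic_lt q hπm)]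

theorem sum_e_mod (e : HayesChar Fq) (π : Polynomial Fq) (hπm : π.Monic)
    (hπ : Irreducible π) (rt : Polynomial Fq) (hrt : ¬ π ∣ rt) :
    ∑ u : Fin π.natDegree → Fq,
      e.toFun (algebraMap (Polynomial Fq) (RatFunc Fq) (rt * polyOf Fq π.natDegree u) /
        algebraMap (Polynomial Fq) (RatFunc Fq) π) = 0 := by
  classical
  have hπ0 : π ≠ 0 := hπm.ne_zero
  have hprime : Prime π := hπ.prime
  set d := π.natDegree with hdd
  have hd : 1 ≤ d := hπ.natDegree_pos
  have hdegπ : π.degree = (d : ℕ) := Polynomial.degree_eq_natDegree hπ0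
  have step1 : ∀ u : Fin d → Fq,
      e.toFun (algebraMap (Polynomial Fq) (RatFunc Fq) (rt * polyOf Fq d u) /
        algebraMap (Polynomial Fq) (RatFunc Fq) π)
      = psiOf e (((rt * polyOf Fq d u) %ₘ π).coeff (d - 1)) := fun u =>
    e_div_eq_psi_mod e π hπm hd _
  rw [Finset.sum_congr rfl fun u _ => step1 u]
  have hreindex := sum_polyOf_comp (n := d) (fun p => (rt * p) %ₘ π)
    (fun p _ => by rw [← hdegπ]; exact Polynomial.degree_modByMonic_lt _ hπm)
    ?_ (fun p => psiOf e (p.coeff (d - 1)))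
  · rw [← hreindex]
    have : ∀ u : Fin d → Fq, psiOf e ((polyOf Fq d u).coeff (d - 1))
        = psiOf e (u ⟨d - 1, by omega⟩) := by
      intro u
      congr 1
      rw [polyOf_coeff]
      simp only [dif_pos (show d - 1 < d by omega)]
    rw [Finset.sum_congr rfl fun u _ => this u]
    exact sum_coord _ _ (sum_psi e)
  · intro p p' hp hp' hmodeq0
    have hmodeq : (rt * p) %ₘ π = (rt * p') %ₘ π := hmodeq0
    have key : ∀ x : Polynomial Fq, π ∣ x - x %ₘ π := by
      intro x
      have h3 : x - (x - π * (x /ₘ π)) = π * (x /ₘ π) := by ring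
      rw [Polynomial.modByMonic_eq_sub_mul_div _ π, h3]
      exact dvd_mul_right _ _
    have hdvd1 : π ∣ rt * p - (rt * p) %ₘ π := key _
    have hdvd2 : π ∣ rt * p' - (rt * p') %ₘ π := key _
    have hdvd : π ∣ rt * (p - p') := by
      have := dvd_sub hdvd1 hdvd2
      rw [hmodeq] at this
      have h2 : rt * p - (rt * p') %ₘ π - (rt * p' - (rt * p') %ₘ π) = rt * (p - p') := by ring
      rwa [h2] at this
    have hdvd' : π ∣ p - p' := (hprime.dvd_or_dvd hdvd).resolve_left hrt
    have : p - p' = 0 := by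
      refine Polynomial.eq_zero_of_dvd_of_degree_lt hdvd' ?_
      rw [hdegπ]
      exact lt_of_le_of_lt (Polynomial.degree_sub_le _ _) (max_lt hp hp')
    exact sub_eq_zero.1 this
end CharSum
section Residue
set_option linter.unusedSectionVars false

variable {Fq : Type} [Field Fq] [Fintype Fq] {ℓ : ℕ}

theorem omega_one (χ : ResidueSymbol Fq ℓ) (hℓ : 1 ≤ ℓ) : χ.omega 1 = 1 := by
  have h1 : (1 : Fq) ^ ℓ = 1 := one_pow ℓ
  have hpow := χ.omega_pow 1 h1
  have hne : χ.omega 1 ≠ 0 := by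
    intro h
    rw [h, zero_pow (by omega : ℓ ≠ 0)] at hpow
    exact zero_ne_one hpow
  have hmul := χ.omega_mul 1 1 h1 h1
  rw [mul_one] at hmul
  have := mul_left_cancel₀ hne (show χ.omega 1 * 1 = χ.omega 1 * χ.omega 1 by
    rw [mul_one, ← hmul])
  exact this.symm

theorem omega_pow_eq (χ : ResidueSymbol Fq ℓ) (hℓ : 1 ≤ ℓ) (x : Fq) (hx : x ^ ℓ = 1)
    (s : ℕ) : χ.omega x ^ s = χ.omega (x ^ s) := by
  induction s with
  | zero => rw [pow_zero, pow_zero, omega_one χ hℓ]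
  | succ s ih =>
    have hxs : (x ^ s) ^ ℓ = 1 := by
      rw [← pow_mul, mul_comm, pow_mul, hx, one_pow]
    rw [pow_succ, ih, pow_succ, χ.omega_mul _ _ hxs hx]

theorem chi_pow (χ : ResidueSymbol Fq ℓ) (a c : Polynomial Fq) (i : ℕ) :
    χ.toFun a (c ^ i) = χ.toFun a c ^ i := by
  induction i with
  | zero => rw [pow_zero, pow_zero, χ.bottom_one]
  | succ s ih => rw [pow_succ, χ.mul_bottom, ih, pow_succ]

noncomputable def nuOf (χ : ResidueSymbol Fq ℓ) (π : Polynomial Fq) (hπm : π.Monic)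
    (hπ : Irreducible π) (a : Polynomial Fq) : Fq :=
  if h : IsCoprime a π then (χ.prime_spec π a hπm hπ h).choose else 1

theorem nu_spec (χ : ResidueSymbol Fq ℓ) (π : Polynomial Fq) (hπm : π.Monic)
    (hπ : Irreducible π) (a : Polynomial Fq) (h : IsCoprime a π) :
    (nuOf χ π hπm hπ a) ^ ℓ = 1 ∧ χ.toFun a π = χ.omega (nuOf χ π hπm hπ a) ∧
      π ∣ a ^ ((Fintype.card Fq ^ π.natDegree - 1) / ℓ) - Polynomial.C (nuOf χ π hπm hπ a) := by
  rw [nuOf, dif_pos h]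
  exact (χ.prime_spec π a hπm hπ h).choose_spec

theorem nu_unique (π : Polynomial Fq) (hπ : Irreducible π) (b : Polynomial Fq) (x y : Fq)
    (h1 : π ∣ b - Polynomial.C x) (h2 : π ∣ b - Polynomial.C y) : x = y := by
  by_contra hxy
  have hsub : π ∣ Polynomial.C y - Polynomial.C x := by
    have := dvd_sub h1 h2
    have h3 : b - Polynomial.C x - (b - Polynomial.C y) = Polynomial.C y - Polynomial.C x := by
      ring
    rwa [h3] at this
  rw [← Polynomial.C_sub] at hsub
  have hunit : IsUnit (Polynomial.C (y - x)) :=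
    Polynomial.isUnit_C.2 (isUnit_iff_ne_zero.2 (sub_ne_zero.2 (Ne.symm hxy)))
  exact hπ.not_isUnit (isUnit_of_dvd_unit hsub hunit)

theorem nu_congr (χ : ResidueSymbol Fq ℓ) (π : Polynomial Fq) (hπm : π.Monic)
    (hπ : Irreducible π) (a b : Polynomial Fq) (ha : IsCoprime a π) (hb : IsCoprime b π)
    (hab : π ∣ a - b) : nuOf χ π hπm hπ a = nuOf χ π hπm hπ b := by
  set m := (Fintype.card Fq ^ π.natDegree - 1) / ℓ
  have hsa := (nu_spec χ π hπm hπ a ha).2.2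
  have hsb := (nu_spec χ π hπm hπ b hb).2.2
  have hpows : π ∣ a ^ m - b ^ m := dvd_trans hab (sub_dvd_pow_sub_pow a b m)
  have h1 : π ∣ b ^ m - Polynomial.C (nuOf χ π hπm hπ a) := by
    have := dvd_sub hsa hpows
    have h3 : a ^ m - Polynomial.C (nuOf χ π hπm hπ a) - (a ^ m - b ^ m)
        = b ^ m - Polynomial.C (nuOf χ π hπm hπ a) := by ring
    rwa [h3] at this
  exact nu_unique π hπ (b ^ m) _ _ h1 hsb

theorem nu_mul (χ : ResidueSymbol Fq ℓ) (π : Polynomial Fq) (hπm : π.Monic)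
    (hπ : Irreducible π) (a b : Polynomial Fq) (ha : IsCoprime a π) (hb : IsCoprime b π) :
    nuOf χ π hπm hπ (a * b) = nuOf χ π hπm hπ a * nuOf χ π hπm hπ b := by
  set m := (Fintype.card Fq ^ π.natDegree - 1) / ℓ
  have hab : IsCoprime (a * b) π := ha.mul_left hb
  have hsa := (nu_spec χ π hπm hπ a ha).2.2
  have hsb := (nu_spec χ π hπm hπ b hb).2.2
  have hsab := (nu_spec χ π hπm hπ (a * b) hab).2.2
  have hd : π ∣ (a * b) ^ m - Polynomial.C (nuOf χ π hπm hπ a * nuOf χ π hπm hπ b) := by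
    rw [mul_pow, Polynomial.C_mul]
    have key : a ^ m * b ^ m - Polynomial.C (nuOf χ π hπm hπ a) * Polynomial.C (nuOf χ π hπm hπ b)
        = (a ^ m - Polynomial.C (nuOf χ π hπm hπ a)) * b ^ m
          + Polynomial.C (nuOf χ π hπm hπ a) * (b ^ m - Polynomial.C (nuOf χ π hπm hπ b)) := by
      ring
    rw [key]
    exact dvd_add (Dvd.dvd.mul_right hsa _) (Dvd.dvd.mul_left hsb _)
  exact nu_unique π hπ ((a * b) ^ m) _ _ hsab hd

end Residue
section Primitive
set_option linter.unusedSectionVars false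

variable {Fq : Type} [Field Fq] [Fintype Fq] {ℓ : ℕ}

theorem exists_primitive (χ : ResidueSymbol Fq ℓ) (hℓ : 2 ≤ ℓ)
    (hq : Fintype.card Fq % (2 * ℓ) = 1) (π : Polynomial Fq) (hπm : π.Monic)
    (hπ : Irreducible π) :
    ∃ a : Polynomial Fq, IsCoprime a π ∧ orderOf (nuOf χ π hπm hπ a) = ℓ := by
  classical
  haveI : Fact (Irreducible π) := ⟨hπ⟩
  have hπ0 : π ≠ 0 := hπm.ne_zero
  set q := Fintype.card Fq with hqdef
  set d := π.natDegree with hdd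
  have hd : 1 ≤ d := hπ.natDegree_pos
  set m := (q ^ d - 1) / ℓ with hmdef
  -- arithmetic
  have hq2 : 2 ≤ q := Fintype.one_lt_card
  have hqℓ : q % ℓ = 1 := by
    have h1 : q % (2 * ℓ) % ℓ = q % ℓ := Nat.mod_mod_of_dvd q ⟨2, by ring⟩
    rw [← h1, hq, Nat.one_mod_eq_one.mpr (by omega)]
  have hqdℓ : q ^ d % ℓ = 1 := by
    rw [Nat.pow_mod, hqℓ, one_pow, Nat.one_mod_eq_one.mpr (by omega)]
  have hdvdℓ : ℓ ∣ q ^ d - 1 := by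
    have := Nat.div_add_mod (q ^ d) ℓ
    rw [hqdℓ] at this
    exact ⟨q ^ d / ℓ, by omega⟩
  have hqbig : 2 * ℓ + 1 ≤ q := by
    have := Nat.div_add_mod q (2 * ℓ)
    rw [hq] at this
    have h2 : q / (2 * ℓ) ≠ 0 := by
      intro h0; rw [h0] at this; omega
    have := Nat.one_le_iff_ne_zero.2 h2
    nlinarith [Nat.div_add_mod q (2 * ℓ), Nat.one_le_iff_ne_zero.2 h2]
  have hqd : q ≤ q ^ d := Nat.le_self_pow (by omega) q
  have hmℓ : m * ℓ = q ^ d - 1 := Nat.div_mul_cancel hdvdℓ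
  have hm1 : 1 ≤ m := by
    rcases Nat.eq_zero_or_pos m with h | h
    · rw [h, zero_mul] at hmℓ; omega
    · exact h
  -- the residue field
  set K := AdjoinRoot π with hK
  letI : Fintype K := Module.fintypeOfFintype (AdjoinRoot.powerBasis hπ0).basis
  have hcard : Fintype.card K = q ^ d := by
    rw [Module.card_fintype (AdjoinRoot.powerBasis hπ0).basis, ← hqdef]
    congr 1
    rw [Fintype.card_fin, AdjoinRoot.powerBasis_dim hπ0, hdd]
  obtain ⟨g, hg⟩ := IsCyclic.exists_generator (α := Kˣ)
  have horder : orderOf g = q ^ d - 1 := by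
    rw [orderOf_eq_card_of_forall_mem_zpowers hg, Nat.card_eq_fintype_card, Fintype.card_units, hcard]
  obtain ⟨a, ha⟩ := AdjoinRoot.mk_surjective (g : K)
  have hadvd : ¬ π ∣ a := by
    intro hdvd
    have : AdjoinRoot.mk π a = 0 := AdjoinRoot.mk_eq_zero.2 hdvd
    rw [ha] at this
    exact Units.ne_zero g this
  have hcop : IsCoprime a π := (hπ.coprime_iff_not_dvd.2 hadvd).symm
  refine ⟨a, hcop, ?_⟩
  set ν := nuOf χ π hπm hπ a with hν
  have hspec := (nu_spec χ π hπm hπ a hcop).2.2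
  -- in K : (g : K) ^ m = of π ν
  have hrel : (g : K) ^ m = AdjoinRoot.of π ν := by
    have h0 : AdjoinRoot.mk π (a ^ ((q ^ d - 1) / ℓ) - Polynomial.C ν) = 0 :=
      AdjoinRoot.mk_eq_zero.2 (by exact_mod_cast hspec)
    rw [map_sub, map_pow, ha, sub_eq_zero] at h0
    rw [← hmdef] at h0
    rw [h0, AdjoinRoot.mk_C]
  -- order computations
  have hordpow : orderOf (g ^ m) = ℓ := by
    rw [orderOf_pow' g (by omega : m ≠ 0), horder]
    have hgcd : Nat.gcd (q ^ d - 1) m = m :=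
      Nat.gcd_eq_right ⟨ℓ, by omega⟩
    rw [hgcd, ← hmℓ, Nat.mul_div_cancel_left ℓ (by omega : 0 < m)]
  have hcast : orderOf ((g ^ m : Kˣ) : K) = ℓ := by rw [orderOf_units]; exact hordpow
  have hofν : orderOf (AdjoinRoot.of π ν) = ℓ := by
    rw [← hrel, ← Units.val_pow_eq_pow_val] at *
    exact hcast
  rw [← hofν]
  exact (orderOf_injective ((AdjoinRoot.of π) : Fq →* K)
    (fun x y hxy => (AdjoinRoot.of π).injective hxy) ν).symm

end Primitive
section Ortho
set_option linter.unusedSectionVars false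

variable {Fq : Type} [Field Fq] [Fintype Fq] {ℓ : ℕ}

theorem coprime_pow_iff (π p : Polynomial Fq) (i : ℕ) (hi : 1 ≤ i) :
    IsCoprime p (π ^ i) ↔ IsCoprime p π := by
  constructor
  · intro h
    exact IsCoprime.of_isCoprime_of_dvd_right h (dvd_pow_self π (by omega))
  · intro h
    exact h.pow_right

theorem chi_term (χ : ResidueSymbol Fq ℓ) (hℓ : 2 ≤ ℓ) (π : Polynomial Fq)
    (hπm : π.Monic) (hπ : Irreducible π) (i j : ℕ) (hi : 1 ≤ i) (hj : 0 < j)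
    (p : Polynomial Fq) :
    χ.toFun p (π ^ i) ^ j
      = if h : IsCoprime p π then χ.omega ((nuOf χ π hπm hπ p) ^ (i * j)) else 0 := by
  split
  · next h =>
    obtain ⟨hν1, hν2, _⟩ := nu_spec χ π hπm hπ p h
    rw [chi_pow, hν2, ← pow_mul, omega_pow_eq χ (by omega) _ hν1]
  · next h =>
    have : ¬ IsCoprime p (π ^ i) := fun hc => h ((coprime_pow_iff π p i hi).1 hc)
    rw [χ.zero_of_not_coprime _ _ this, zero_pow (by omega : j ≠ 0)]

theorem chi_term_one (χ : ResidueSymbol Fq ℓ) (hℓ : 2 ≤ ℓ) (π : Polynomial Fq)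
    (hπm : π.Monic) (hπ : Irreducible π) (i j : ℕ) (hi : 1 ≤ i) (hj : 0 < j)
    (hij : ℓ ∣ i * j) (p : Polynomial Fq) (h : IsCoprime p π) :
    χ.toFun p (π ^ i) ^ j = 1 := by
  rw [chi_term χ hℓ π hπm hπ i j hi hj, dif_pos h]
  obtain ⟨hν1, _, _⟩ := nu_spec χ π hπm hπ p h
  obtain ⟨k, hk⟩ := hij
  rw [hk, pow_mul, hν1, one_pow, omega_one χ (by omega)]

theorem coprime_irred_iff (π : Polynomial Fq) (hπ : Irreducible π) (a : Polynomial Fq) :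
    IsCoprime a π ↔ ¬ π ∣ a := by
  rw [isCoprime_comm]; exact hπ.coprime_iff_not_dvd

theorem dvd_sub_modByMonic (c x : Polynomial Fq) (hc : c.Monic) : c ∣ x - x %ₘ c := by
  have h3 : x - (x - c * (x /ₘ c)) = c * (x /ₘ c) := by ring
  rw [Polynomial.modByMonic_eq_sub_mul_div _ c, h3]
  exact dvd_mul_right _ _

theorem sum_chi_zero (χ : ResidueSymbol Fq ℓ) (hℓ : 2 ≤ ℓ)
    (hq : Fintype.card Fq % (2 * ℓ) = 1) (j : ℕ) (hj : 0 < j) (π : Polynomial Fq)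
    (hπm : π.Monic) (hπ : Irreducible π) (i : ℕ) (hi : 1 ≤ i) (hij : ¬ ℓ ∣ i * j) :
    ∑ a : Fin (i * π.natDegree) → Fq,
      χ.toFun (polyOf Fq (i * π.natDegree) a) (π ^ i) ^ j = 0 := by
  classical
  have hπ0 : π ≠ 0 := hπm.ne_zero
  set d := π.natDegree with hdd
  set n := i * d with hnn
  have hpowm : (π ^ i).Monic := hπm.pow i
  have hpow0 : π ^ i ≠ 0 := hpowm.ne_zero
  have hpowdeg : (π ^ i).degree = (n : ℕ) := by
    rw [Polynomial.degree_eq_natDegree hpow0, Polynomial.natDegree_pow]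
  obtain ⟨a₀, hcop₀, hord⟩ := exists_primitive χ hℓ hq π hπm hπ
  set ζ := nuOf χ π hπm hπ a₀ with hζdef
  have hζℓ : ζ ^ ℓ = 1 := (nu_spec χ π hπm hπ a₀ hcop₀).1
  have hζij : ζ ^ (i * j) ≠ 1 := by
    intro hone
    exact hij (hord ▸ orderOf_dvd_of_pow_eq_one hone)
  have hζijℓ : (ζ ^ (i * j)) ^ ℓ = 1 := by
    rw [← pow_mul, mul_comm, pow_mul, hζℓ, one_pow]
  have hωζ : χ.omega (ζ ^ (i * j)) ≠ 1 := by
    intro hone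
    apply hζij
    exact χ.omega_inj _ _ hζijℓ (one_pow ℓ) (by rw [hone, omega_one χ (by omega)])
  set F : Polynomial Fq → ℂ := fun p => χ.toFun p (π ^ i) ^ j with hF
  have hstep : (∑ a : Fin n → Fq, F (polyOf Fq n a))
      = ∑ a : Fin n → Fq, F ((a₀ * polyOf Fq n a) %ₘ (π ^ i)) := by
    refine sum_polyOf_comp (σ := fun p => (a₀ * p) %ₘ (π ^ i)) ?_ ?_ F
    · intro p _
      rw [← hpowdeg]
      exact Polynomial.degree_modByMonic_lt _ hpowm
    · intro p p' hp hp' hmod0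
      have hmod : (a₀ * p) %ₘ (π ^ i) = (a₀ * p') %ₘ (π ^ i) := hmod0
      have hdvd : π ^ i ∣ (p - p') * a₀ := by
        have h1 := dvd_sub_modByMonic (π ^ i) (a₀ * p) hpowm
        have h2 := dvd_sub_modByMonic (π ^ i) (a₀ * p') hpowm
        have := dvd_sub h1 h2
        rw [hmod] at this
        have h4 : a₀ * p - (a₀ * p') %ₘ π ^ i - (a₀ * p' - (a₀ * p') %ₘ π ^ i)
            = (p - p') * a₀ := by ring
        rwa [h4] at this
      have hcopi : IsCoprime (π ^ i) a₀ := (hcop₀.pow_right).symm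
      have := hcopi.dvd_of_dvd_mul_right hdvd
      have hz : p - p' = 0 := by
        refine Polynomial.eq_zero_of_dvd_of_degree_lt this ?_
        rw [hpowdeg]
        exact lt_of_le_of_lt (Polynomial.degree_sub_le _ _) (max_lt hp hp')
      exact sub_eq_zero.1 hz
  have hterm : ∀ p : Polynomial Fq,
      F ((a₀ * p) %ₘ (π ^ i)) = χ.omega (ζ ^ (i * j)) * F p := by
    intro p
    have hcongru : π ∣ (a₀ * p) %ₘ (π ^ i) - a₀ * p := by
      have h4 := dvd_sub_modByMonic (π ^ i) (a₀ * p) hpowm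
      have h5 := (dvd_pow_self π (show i ≠ 0 by omega)).trans h4
      have h6 : (a₀ * p) %ₘ (π ^ i) - a₀ * p = -(a₀ * p - (a₀ * p) %ₘ (π ^ i)) := by ring
      rw [h6]
      exact dvd_neg.2 h5
    by_cases hc : IsCoprime p π
    · have hcc : IsCoprime (a₀ * p) π := hcop₀.mul_left hc
      have hcmod : IsCoprime ((a₀ * p) %ₘ (π ^ i)) π := by
        rw [coprime_irred_iff π hπ] at hcc ⊢
        intro hdvd
        exact hcc (by
          have := dvd_sub hdvd hcongru
          have h6 : (a₀ * p) %ₘ π ^ i - ((a₀ * p) %ₘ (π ^ i) - a₀ * p) = a₀ * p := by ring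
          rwa [h6] at this)
      have hνmod : nuOf χ π hπm hπ ((a₀ * p) %ₘ (π ^ i)) = ζ * nuOf χ π hπm hπ p := by
        rw [nu_congr χ π hπm hπ _ (a₀ * p) hcmod hcc hcongru, nu_mul χ π hπm hπ a₀ p hcop₀ hc]
      have hνp := nu_spec χ π hπm hπ p hc
      rw [hF]
      simp only
      rw [chi_term χ hℓ π hπm hπ i j hi hj, chi_term χ hℓ π hπm hπ i j hi hj,
        dif_pos hcmod, dif_pos hc, hνmod, mul_pow]
      rw [χ.omega_mul _ _ hζijℓ (by rw [← pow_mul, mul_comm (i*j) ℓ, pow_mul, hνp.1, one_pow])]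
    · have hcc : ¬ IsCoprime (a₀ * p) π := by
        intro h
        exact hc (h.of_mul_left_right)
      have hcmod : ¬ IsCoprime ((a₀ * p) %ₘ (π ^ i)) π := by
        rw [coprime_irred_iff π hπ] at hcc ⊢
        push_neg at hcc ⊢
        have := dvd_add hcc hcongru
        have h6 : a₀ * p + ((a₀ * p) %ₘ (π ^ i) - a₀ * p) = (a₀ * p) %ₘ (π ^ i) := by ring
        rwa [h6] at this
      rw [hF]
      simp only
      rw [chi_term χ hℓ π hπm hπ i j hi hj, chi_term χ hℓ π hπm hπ i j hi hj,
        dif_neg hcmod, dif_neg hc, mul_zero]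
  have hsum : (∑ a : Fin n → Fq, F (polyOf Fq n a))
      = χ.omega (ζ ^ (i * j)) * ∑ a : Fin n → Fq, F (polyOf Fq n a) := by
    conv_lhs => rw [hstep]
    rw [Finset.mul_sum]
    exact Finset.sum_congr rfl fun a _ => hterm _
  have hfin : (∑ a : Fin n → Fq, F (polyOf Fq n a)) * (χ.omega (ζ ^ (i * j)) - 1) = 0 := by
    rw [mul_sub, mul_one, mul_comm, ← hsum, sub_self]
  rcases mul_eq_zero.1 hfin with h | h
  · exact h
  · exact absurd (sub_eq_zero.1 h) hωζ

end Ortho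
section MainAux
set_option linter.unusedSectionVars false

variable {Fq : Type} [Field Fq] [Fintype Fq] {ℓ : ℕ}

theorem gaussSum_eq (χ : ResidueSymbol Fq ℓ) (e : HayesChar Fq) (j : ℕ)
    (r c : Polynomial Fq) (n : ℕ) (h : c.natDegree = n) :
    GaussSum χ e j r c = ∑ a : Fin n → Fq,
      χ.toFun (polyOf Fq n a) c ^ j *
        e.toFun (algebraMap (Polynomial Fq) (RatFunc Fq) (r * polyOf Fq n a) /
          algebraMap (Polynomial Fq) (RatFunc Fq) c) := by
  subst h; rfl

theorem sum_indicator (c : Polynomial Fq) (n : ℕ) (h : c.natDegree = n) :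
    (∑ a : Fin n → Fq, (if IsCoprime (polyOf Fq n a) c then (1 : ℂ) else 0))
      = (polyPhi c : ℂ) := by
  subst h
  classical
  rw [Finset.sum_boole, polyPhi, Nat.card_eq_fintype_card, Fintype.card_subtype]

theorem polyOf_zero (n : ℕ) : polyOf Fq n (fun _ => 0) = 0 := by
  rw [polyOf]
  simp

end MainAux
set_option maxHeartbeats 1600000 in

/-- Values of the shifted Gauss sum `G_{ℓ,j}(r, π^i)` for a monic
irreducible `π`, where `r = r̃ π^α` with `π ∤ r̃`:
(a) if `i ≤ α` and `ij ≢ 0 (mod ℓ)` it vanishes;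
(b) if `i ≤ α` and `ij ≡ 0 (mod ℓ)` it equals `φ(π^i)`;
(c) if `i = α + 1` and `ij ≡ 0 (mod ℓ)` it equals `-q^{(i-1) deg π}`;
(d) if `i ≥ α + 2` it vanishes. -/
theorem gaussSum_primePow {Fq : Type} [Field Fq] [Fintype Fq] (ℓ : ℕ) (hℓ : 2 ≤ ℓ)
    (hq : Fintype.card Fq % (2 * ℓ) = 1)
    (χ : ResidueSymbol Fq ℓ) (e : HayesChar Fq) (j : ℕ) (hj : 0 < j)
    (π rt : Polynomial Fq) (α : ℕ) (hπm : π.Monic) (hπ : Irreducible π)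
    (hrt : ¬ π ∣ rt) (i : ℕ) :
    (i ≤ α → ¬ (ℓ ∣ i * j) → GaussSum χ e j (rt * π ^ α) (π ^ i) = 0) ∧
    (i ≤ α → ℓ ∣ i * j →
      GaussSum χ e j (rt * π ^ α) (π ^ i) = (polyPhi (π ^ i) : ℂ)) ∧
    (i = α + 1 → ℓ ∣ i * j →
      GaussSum χ e j (rt * π ^ α) (π ^ i)
        = - (Fintype.card Fq : ℂ) ^ ((i - 1) * π.natDegree)) ∧
    (α + 2 ≤ i → GaussSum χ e j (rt * π ^ α) (π ^ i) = 0) := by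
  classical
  have hπ0 : π ≠ 0 := hπm.ne_zero
  have hd : 1 ≤ π.natDegree := hπ.natDegree_pos
  have hAπ : algebraMap (Polynomial Fq) (RatFunc Fq) π ≠ 0 := RatFunc.algebraMap_ne_zero hπ0
  have hAπi : ∀ m : ℕ, algebraMap (Polynomial Fq) (RatFunc Fq) (π ^ m) ≠ 0 :=
    fun m => RatFunc.algebraMap_ne_zero (pow_ne_zero m hπ0)
  have hn : ∀ m : ℕ, (π ^ m).natDegree = m * π.natDegree := fun m =>
    Polynomial.natDegree_pow π m
  have eterm_le : i ≤ α → ∀ p : Polynomial Fq,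
      e.toFun (algebraMap (Polynomial Fq) (RatFunc Fq) (rt * π ^ α * p) /
        algebraMap (Polynomial Fq) (RatFunc Fq) (π ^ i)) = 1 := by
    intro hiα p
    have hπα : π ^ i * π ^ (α - i) = π ^ α := by
      rw [← pow_add]; congr 1; omega
    have hsplit : rt * π ^ α * p = π ^ i * (rt * π ^ (α - i) * p) := by
      rw [← hπα]; ring
    rw [hsplit, map_mul, mul_div_cancel_left₀ _ (hAπi i), e_poly]
  have hdvd_iff : ∀ u : Polynomial Fq, u.degree < (π.natDegree : ℕ) → (π ∣ u ↔ u = 0) := by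
    intro u hu
    constructor
    · intro hdvd
      refine Polynomial.eq_zero_of_dvd_of_degree_lt hdvd ?_
      rwa [Polynomial.degree_eq_natDegree hπ0]
    · intro h; rw [h]; exact dvd_zero π
  -- Part (a)
  have parta : i ≤ α → ¬ (ℓ ∣ i * j) → GaussSum χ e j (rt * π ^ α) (π ^ i) = 0 := by
    intro hiα hij
    have hi1 : 1 ≤ i := by
      rcases Nat.eq_zero_or_pos i with h | h
      · exact absurd (by rw [h, zero_mul]; exact dvd_zero ℓ) hij
      · exact h
    rw [gaussSum_eq χ e j _ (π ^ i) (i * π.natDegree) (hn i)]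
    have hcongr : ∀ a : Fin (i * π.natDegree) → Fq,
        χ.toFun (polyOf Fq (i * π.natDegree) a) (π ^ i) ^ j *
          e.toFun (algebraMap (Polynomial Fq) (RatFunc Fq)
              (rt * π ^ α * polyOf Fq (i * π.natDegree) a) /
            algebraMap (Polynomial Fq) (RatFunc Fq) (π ^ i))
        = χ.toFun (polyOf Fq (i * π.natDegree) a) (π ^ i) ^ j := by
      intro a
      rw [eterm_le hiα, mul_one]
    rw [Finset.sum_congr rfl fun a _ => hcongr a]
    exact sum_chi_zero χ hℓ hq j hj π hπm hπ i hi1 hij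
  -- Part (b)
  have partb : i ≤ α → ℓ ∣ i * j → GaussSum χ e j (rt * π ^ α) (π ^ i) = (polyPhi (π ^ i) : ℂ) := by
    intro hiα hij
    rcases Nat.eq_zero_or_pos i with hi0 | hi1
    · subst hi0
      rw [pow_zero, gaussSum_eq χ e j _ 1 0 Polynomial.natDegree_one]
      have hval : ∀ a : Fin 0 → Fq,
          χ.toFun (polyOf Fq 0 a) 1 ^ j *
            e.toFun (algebraMap (Polynomial Fq) (RatFunc Fq) (rt * π ^ α * polyOf Fq 0 a) /
              algebraMap (Polynomial Fq) (RatFunc Fq) 1) = 1 := by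
        intro a
        have h0 : polyOf Fq 0 a = 0 := by rw [polyOf]; simp
        rw [h0, χ.bottom_one, one_pow, one_mul, mul_zero, map_zero, zero_div, e.map_zero']
      rw [Finset.sum_congr rfl fun a _ => hval a, Finset.sum_const, Finset.card_univ]
      have hphi : polyPhi (1 : Polynomial Fq) = 1 := by
        rw [polyPhi, Nat.card_eq_fintype_card, Fintype.card_subtype]
        rw [Finset.filter_true_of_mem (fun a _ => isCoprime_one_right)]
        simp
      rw [hphi]
      simp
    · rw [gaussSum_eq χ e j _ (π ^ i) (i * π.natDegree) (hn i)]
      have hval : ∀ a : Fin (i * π.natDegree) → Fq,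
          χ.toFun (polyOf Fq (i * π.natDegree) a) (π ^ i) ^ j *
            e.toFun (algebraMap (Polynomial Fq) (RatFunc Fq)
                (rt * π ^ α * polyOf Fq (i * π.natDegree) a) /
              algebraMap (Polynomial Fq) (RatFunc Fq) (π ^ i))
          = if IsCoprime (polyOf Fq (i * π.natDegree) a) (π ^ i) then (1 : ℂ) else 0 := by
        intro a
        rw [eterm_le hiα, mul_one]
        by_cases hc : IsCoprime (polyOf Fq (i * π.natDegree) a) π
        · rw [if_pos (hc.pow_right), chi_term_one χ hℓ π hπm hπ i j hi1 hj hij _ hc]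
        · rw [if_neg (fun hcc => hc ((coprime_pow_iff π _ i hi1).1 hcc)),
            χ.zero_of_not_coprime _ _ (fun hcc => hc ((coprime_pow_iff π _ i hi1).1 hcc)),
            zero_pow (by omega : j ≠ 0)]
      rw [Finset.sum_congr rfl fun a _ => hval a]
      exact sum_indicator (π ^ i) (i * π.natDegree) (hn i)
  -- Part (c)
  have partc : i = α + 1 → ℓ ∣ i * j →
      GaussSum χ e j (rt * π ^ α) (π ^ i)
        = - (Fintype.card Fq : ℂ) ^ ((i - 1) * π.natDegree) := by
    intro hiα hij
    subst hiα
    rw [gaussSum_eq χ e j _ (π ^ (α + 1)) (π.natDegree + α * π.natDegree) (by rw [hn]; ring)]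
    rw [sum_split π hπm π.natDegree (α * π.natDegree) rfl (fun p =>
      χ.toFun p (π ^ (α + 1)) ^ j *
        e.toFun (algebraMap (Polynomial Fq) (RatFunc Fq) (rt * π ^ α * p) /
          algebraMap (Polynomial Fq) (RatFunc Fq) (π ^ (α + 1))))]
    have hterm : ∀ (w : Fin (α * π.natDegree) → Fq) (u : Fin π.natDegree → Fq),
        χ.toFun (polyOf Fq π.natDegree u + π * polyOf Fq (α * π.natDegree) w) (π ^ (α + 1)) ^ j *
          e.toFun (algebraMap (Polynomial Fq) (RatFunc Fq)
              (rt * π ^ α * (polyOf Fq π.natDegree u + π * polyOf Fq (α * π.natDegree) w)) /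
            algebraMap (Polynomial Fq) (RatFunc Fq) (π ^ (α + 1)))
        = e.toFun (algebraMap (Polynomial Fq) (RatFunc Fq) (rt * polyOf Fq π.natDegree u) /
            algebraMap (Polynomial Fq) (RatFunc Fq) π)
          - (if u = 0 then 1 else 0) := by
      intro w u
      have hπp : π ∣ polyOf Fq π.natDegree u + π * polyOf Fq (α * π.natDegree) w ↔
          polyOf Fq π.natDegree u = 0 := by
        rw [← hdvd_iff (polyOf Fq π.natDegree u) (polyOf_degree_lt _ u)]
        constructor
        · intro h
          have h2 : π ∣ polyOf Fq π.natDegree u + π * polyOf Fq (α * π.natDegree) w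
              - π * polyOf Fq (α * π.natDegree) w := dvd_sub h (dvd_mul_right _ _)
          rwa [add_sub_cancel_right] at h2
        · intro h
          exact dvd_add h (dvd_mul_right _ _)
      by_cases hu : u = 0
      · have hu0 : polyOf Fq π.natDegree u = 0 := by rw [hu]; exact polyOf_zero _
        have hnc : ¬ IsCoprime (polyOf Fq π.natDegree u + π * polyOf Fq (α * π.natDegree) w)
            (π ^ (α + 1)) := by
          intro hcc
          have h1 := (coprime_pow_iff π _ (α + 1) (by omega)).1 hcc
          rw [coprime_irred_iff π hπ] at h1
          exact h1 (hπp.2 hu0)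
        rw [χ.zero_of_not_coprime _ _ hnc, zero_pow (by omega : j ≠ 0), zero_mul,
          if_pos hu, hu0, mul_zero, map_zero, zero_div, e.map_zero']
        norm_num
      · have hu0 : polyOf Fq π.natDegree u ≠ 0 := fun h =>
          hu (polyOf_injective _ (h.trans (polyOf_zero _).symm))
        have hcop : IsCoprime (polyOf Fq π.natDegree u + π * polyOf Fq (α * π.natDegree) w)
            π := by
          rw [coprime_irred_iff π hπ]
          intro h
          exact hu0 (hπp.1 h)
        rw [chi_term_one χ hℓ π hπm hπ (α + 1) j (by omega) hj hij _ hcop, one_mul,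
          if_neg hu, sub_zero]
        have heq : algebraMap (Polynomial Fq) (RatFunc Fq)
              (rt * π ^ α * (polyOf Fq π.natDegree u + π * polyOf Fq (α * π.natDegree) w)) /
            algebraMap (Polynomial Fq) (RatFunc Fq) (π ^ (α + 1))
            = algebraMap (Polynomial Fq) (RatFunc Fq) (rt * polyOf Fq π.natDegree u) /
              algebraMap (Polynomial Fq) (RatFunc Fq) π
            + algebraMap (Polynomial Fq) (RatFunc Fq)
                (rt * polyOf Fq (α * π.natDegree) w) := by
          simp only [map_mul, map_add, map_pow]
          field_simp
          ring
        rw [heq, e.map_add', e_poly, mul_one]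
    rw [Finset.sum_congr rfl fun w (_ : w ∈ Finset.univ) =>
      Finset.sum_congr rfl fun u (_ : u ∈ Finset.univ) => hterm w u]
    have hinner : (∑ u : Fin π.natDegree → Fq,
        (e.toFun (algebraMap (Polynomial Fq) (RatFunc Fq) (rt * polyOf Fq π.natDegree u) /
            algebraMap (Polynomial Fq) (RatFunc Fq) π)
          - (if u = 0 then (1 : ℂ) else 0))) = -1 := by
      rw [Finset.sum_sub_distrib, sum_e_mod e π hπm hπ rt hrt]
      rw [Finset.sum_ite_eq' Finset.univ (0 : Fin π.natDegree → Fq) (fun _ => (1 : ℂ))]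
      simp
    rw [Finset.sum_congr rfl fun w (_ : w ∈ Finset.univ) => hinner]
    rw [Finset.sum_const, Finset.card_univ, Fintype.card_fun]
    simp only [Nat.add_sub_cancel]
    simp only [Fintype.card_fin, nsmul_eq_mul]
    push_cast
    ring
  -- Part (d)
  have partd : α + 2 ≤ i → GaussSum χ e j (rt * π ^ α) (π ^ i) = 0 := by
    intro hi2
    obtain ⟨s, hs1, hseq⟩ : ∃ s : ℕ, 1 ≤ s ∧ i = s + 1 + α :=
      ⟨i - α - 1, by omega, by omega⟩
    subst hseq
    rw [gaussSum_eq χ e j _ (π ^ (s + 1 + α))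
      (s * π.natDegree + (π.natDegree + α * π.natDegree)) (by rw [hn]; ring)]
    rw [sum_split (π ^ s) (hπm.pow s) (s * π.natDegree) (π.natDegree + α * π.natDegree)
      (hn s) (fun p =>
        χ.toFun p (π ^ (s + 1 + α)) ^ j *
          e.toFun (algebraMap (Polynomial Fq) (RatFunc Fq) (rt * π ^ α * p) /
            algebraMap (Polynomial Fq) (RatFunc Fq) (π ^ (s + 1 + α))))]
    rw [sum_split π hπm π.natDegree (α * π.natDegree) rfl (fun p =>
      ∑ b : Fin (s * π.natDegree) → Fq,
        χ.toFun (polyOf Fq (s * π.natDegree) b + π ^ s * p) (π ^ (s + 1 + α)) ^ j *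
          e.toFun (algebraMap (Polynomial Fq) (RatFunc Fq)
              (rt * π ^ α * (polyOf Fq (s * π.natDegree) b + π ^ s * p)) /
            algebraMap (Polynomial Fq) (RatFunc Fq) (π ^ (s + 1 + α))))]
    have hterm : ∀ (w : Fin (α * π.natDegree) → Fq) (u : Fin π.natDegree → Fq)
        (b : Fin (s * π.natDegree) → Fq),
        χ.toFun (polyOf Fq (s * π.natDegree) b
            + π ^ s * (polyOf Fq π.natDegree u + π * polyOf Fq (α * π.natDegree) w))
            (π ^ (s + 1 + α)) ^ j *
          e.toFun (algebraMap (Polynomial Fq) (RatFunc Fq)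
              (rt * π ^ α * (polyOf Fq (s * π.natDegree) b
                + π ^ s * (polyOf Fq π.natDegree u + π * polyOf Fq (α * π.natDegree) w))) /
            algebraMap (Polynomial Fq) (RatFunc Fq) (π ^ (s + 1 + α)))
        = e.toFun (algebraMap (Polynomial Fq) (RatFunc Fq) (rt * polyOf Fq π.natDegree u) /
            algebraMap (Polynomial Fq) (RatFunc Fq) π)
          * (χ.toFun (polyOf Fq (s * π.natDegree) b) (π ^ (s + 1 + α)) ^ j *
            e.toFun (algebraMap (Polynomial Fq) (RatFunc Fq)
                (rt * polyOf Fq (s * π.natDegree) b) /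
              algebraMap (Polynomial Fq) (RatFunc Fq) (π ^ (s + 1)))) := by
      intro w u b
      set bp := polyOf Fq (s * π.natDegree) b with hbp
      set p := bp + π ^ s * (polyOf Fq π.natDegree u + π * polyOf Fq (α * π.natDegree) w)
        with hpdef
      have hπdvd : π ∣ p - bp := by
        rw [hpdef, add_sub_cancel_left]
        exact (dvd_pow_self π (by omega : s ≠ 0)).mul_right _
      have hcopiff : IsCoprime p π ↔ IsCoprime bp π := by
        rw [coprime_irred_iff π hπ, coprime_irred_iff π hπ]
        constructor
        · intro h hb
          apply h
          have := dvd_add hb hπdvd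
          rwa [add_sub_cancel] at this
        · intro h hp2
          apply h
          have := dvd_sub hp2 hπdvd
          rwa [sub_sub_cancel] at this
      have hχ : χ.toFun p (π ^ (s + 1 + α)) ^ j = χ.toFun bp (π ^ (s + 1 + α)) ^ j := by
        rw [chi_term χ hℓ π hπm hπ (s + 1 + α) j (by omega) hj p,
          chi_term χ hℓ π hπm hπ (s + 1 + α) j (by omega) hj bp]
        by_cases hc : IsCoprime bp π
        · rw [dif_pos (hcopiff.2 hc), dif_pos hc,
            nu_congr χ π hπm hπ p bp (hcopiff.2 hc) hc hπdvd]
        · rw [dif_neg (fun hcc => hc (hcopiff.1 hcc)), dif_neg hc]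
      have heq : algebraMap (Polynomial Fq) (RatFunc Fq) (rt * π ^ α * p) /
          algebraMap (Polynomial Fq) (RatFunc Fq) (π ^ (s + 1 + α))
          = algebraMap (Polynomial Fq) (RatFunc Fq) (rt * bp) /
              algebraMap (Polynomial Fq) (RatFunc Fq) (π ^ (s + 1))
            + algebraMap (Polynomial Fq) (RatFunc Fq) (rt * polyOf Fq π.natDegree u) /
              algebraMap (Polynomial Fq) (RatFunc Fq) π
            + algebraMap (Polynomial Fq) (RatFunc Fq)
                (rt * polyOf Fq (α * π.natDegree) w) := by
        rw [hpdef, hbp]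
        simp only [map_mul, map_add, map_pow]
        field_simp
        ring
      rw [hχ, heq, e.map_add', e.map_add', e_poly, mul_one]
      ring
    rw [Finset.sum_congr rfl fun w (_ : w ∈ Finset.univ) =>
      Finset.sum_congr rfl fun u (_ : u ∈ Finset.univ) =>
        Finset.sum_congr rfl fun b (_ : b ∈ Finset.univ) => hterm w u b]
    have hzero : ∀ w : Fin (α * π.natDegree) → Fq,
        (∑ u : Fin π.natDegree → Fq, ∑ b : Fin (s * π.natDegree) → Fq,
          e.toFun (algebraMap (Polynomial Fq) (RatFunc Fq) (rt * polyOf Fq π.natDegree u) /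
              algebraMap (Polynomial Fq) (RatFunc Fq) π)
            * (χ.toFun (polyOf Fq (s * π.natDegree) b) (π ^ (s + 1 + α)) ^ j *
              e.toFun (algebraMap (Polynomial Fq) (RatFunc Fq)
                  (rt * polyOf Fq (s * π.natDegree) b) /
                algebraMap (Polynomial Fq) (RatFunc Fq) (π ^ (s + 1))))) = 0 := by
      intro w
      have h1 : ∀ u : Fin π.natDegree → Fq,
          (∑ b : Fin (s * π.natDegree) → Fq,
            e.toFun (algebraMap (Polynomial Fq) (RatFunc Fq) (rt * polyOf Fq π.natDegree u) /
                algebraMap (Polynomial Fq) (RatFunc Fq) π)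
              * (χ.toFun (polyOf Fq (s * π.natDegree) b) (π ^ (s + 1 + α)) ^ j *
                e.toFun (algebraMap (Polynomial Fq) (RatFunc Fq)
                    (rt * polyOf Fq (s * π.natDegree) b) /
                  algebraMap (Polynomial Fq) (RatFunc Fq) (π ^ (s + 1)))))
          = e.toFun (algebraMap (Polynomial Fq) (RatFunc Fq) (rt * polyOf Fq π.natDegree u) /
                algebraMap (Polynomial Fq) (RatFunc Fq) π)
              * (∑ b : Fin (s * π.natDegree) → Fq,
                χ.toFun (polyOf Fq (s * π.natDegree) b) (π ^ (s + 1 + α)) ^ j *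
                  e.toFun (algebraMap (Polynomial Fq) (RatFunc Fq)
                      (rt * polyOf Fq (s * π.natDegree) b) /
                    algebraMap (Polynomial Fq) (RatFunc Fq) (π ^ (s + 1)))) :=
        fun u => by rw [Finset.mul_sum]
      rw [Finset.sum_congr rfl fun u (_ : u ∈ Finset.univ) => h1 u, ← Finset.sum_mul,
        sum_e_mod e π hπm hπ rt hrt, zero_mul]
    rw [Finset.sum_congr rfl fun w (_ : w ∈ Finset.univ) => hzero w, Finset.sum_const, smul_zero]
  exact ⟨parta, partb, partc, partd⟩
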